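/- Every C-finite sequence admits a closed form as an exponential polynomial: if (a_n) is a sequence of complex numbers satisfying a linear recurrence a_{n+l} = c_{l-1} a_{n+l-1} + ... + c_0 a_n with constant complex coefficients c_i and c_0 ≠ 0, then there exist finitely many complex numbers u_1,...,u_m (the roots of the characteristic polynomial) and polynomials q_1,...,q_m such that a_n = sum_{i=1}^m q_i(n) · u_i^n for all n. -/

import Mathlib

section CfiniteAux
open Polynomial Finset

lemma solveL (r : ℂ) : ∀ (d : ℕ) (q : Polynomial ℂ), q.natDegree ≤ d →
    ∃ Q : Polynomial ℂ, C r * Q.comp (X + 1) - Q = q := by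
  intro d
  induction d with
  | zero =>
    intro q hq
    have hq' : q = C (q.coeff 0) := q.eq_C_of_natDegree_le_zero hq
    by_cases hr : r = 1
    · refine ⟨C (q.coeff 0) * X, ?_⟩
      subst hr
      rw [hq']
      simp [mul_comp]
      ring
    · refine ⟨C (q.coeff 0 / (r - 1)), ?_⟩
      rw [hq']
      rw [C_comp, ← C_mul, ← C_sub]
      congr 1
      simp only [coeff_C_zero]
      have h1 : r - 1 ≠ 0 := sub_ne_zero.mpr hr
      field_simp
  | succ d ih =>
    intro q hq
    set lc := q.coeff (d + 1) with hlc
    by_cases hr : r = 1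
    · subst hr
      set a : ℂ := lc / (d + 2) with ha
      set L1 : Polynomial ℂ := C 1 * (C a * (X + 1) ^ (d + 2)) - C a * X ^ (d + 2) with hL1
      have hd2 : ((d : ℂ) + 2) ≠ 0 := by
        have h0 : ((d+2:ℕ):ℂ) ≠ 0 := Nat.cast_ne_zero.mpr (by omega)
        push_cast at h0
        exact h0
      have hdeg : (q - L1).natDegree ≤ d := by
        rw [natDegree_le_iff_coeff_eq_zero]
        intro k hk
        rw [coeff_sub, hL1, coeff_sub, coeff_C_mul, coeff_C_mul, coeff_C_mul,
          coeff_X_add_one_pow, coeff_X_pow]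
        rcases eq_or_lt_of_le (Nat.succ_le_of_lt hk) with h | h
        · -- k = d + 1
          have hk1 : k = d + 1 := h.symm
          subst hk1
          have : (Nat.choose (d+2) (d+1) : ℂ) = (d : ℂ) + 2 := by
            rw [Nat.choose_succ_self_right]; push_cast; ring
          simp [this, ha]
          field_simp
          ring
        · -- k ≥ d + 2
          have hq0 : q.coeff k = 0 := coeff_eq_zero_of_natDegree_lt (by omega)
          rcases eq_or_lt_of_le (Nat.succ_le_of_lt h) with h2 | h2
          · have hk2 : k = d + 2 := h2.symm
            subst hk2
            simp [hq0]
          · have : Nat.choose (d+2) k = 0 := Nat.choose_eq_zero_of_lt (by omega)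
            simp [hq0, this]
            intro h; exact absurd h (by omega)
      obtain ⟨Q2, hQ2⟩ := ih (q - L1) hdeg
      refine ⟨C a * X ^ (d + 2) + Q2, ?_⟩
      simp only [add_comp, mul_comp, C_comp, pow_comp, X_comp]
      rw [mul_add]
      have : C 1 * (C a * (X + 1) ^ (d + 2)) + C 1 * Q2.comp (X + 1) - (C a * X ^ (d + 2) + Q2)
          = L1 + (C 1 * Q2.comp (X + 1) - Q2) := by rw [hL1]; ring
      rw [this, hQ2]
      ring
    · set a : ℂ := lc / (r - 1) with ha
      have hr1 : r - 1 ≠ 0 := sub_ne_zero.mpr hr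
      set L1 : Polynomial ℂ := C r * (C a * (X + 1) ^ (d + 1)) - C a * X ^ (d + 1) with hL1
      have hdeg : (q - L1).natDegree ≤ d := by
        rw [natDegree_le_iff_coeff_eq_zero]
        intro k hk
        rw [coeff_sub, hL1, coeff_sub, coeff_C_mul, coeff_C_mul, coeff_C_mul,
          coeff_X_add_one_pow, coeff_X_pow]
        rcases eq_or_lt_of_le (Nat.succ_le_of_lt hk) with h | h
        · have hk1 : k = d + 1 := h.symm
          subst hk1
          simp [ha]
          field_simp
          ring
        · have hq0 : q.coeff k = 0 := coeff_eq_zero_of_natDegree_lt (by omega)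
          have : Nat.choose (d+1) k = 0 := Nat.choose_eq_zero_of_lt (by omega)
          simp [hq0, this]
          intro h; exact absurd h (by omega)
      obtain ⟨Q2, hQ2⟩ := ih (q - L1) hdeg
      refine ⟨C a * X ^ (d + 1) + Q2, ?_⟩
      simp only [add_comp, mul_comp, C_comp, pow_comp, X_comp]
      rw [mul_add]
      have : C r * (C a * (X + 1) ^ (d + 1)) + C r * Q2.comp (X + 1) - (C a * X ^ (d + 1) + Q2)
          = L1 + (C r * Q2.comp (X + 1) - Q2) := by rw [hL1]; ring
      rw [this, hQ2]
      ring

lemma partialSum (q : Polynomial ℂ) (r : ℂ) :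
    ∃ (Q : Polynomial ℂ) (Cst : ℂ), ∀ n : ℕ,
      ∑ k ∈ Finset.range n, q.eval (k : ℂ) * r ^ k = Q.eval (n : ℂ) * r ^ n + Cst := by
  by_cases hr : r = 0
  · subst hr
    refine ⟨C (-q.eval 0), q.eval 0, ?_⟩
    intro n
    cases n with
    | zero => simp
    | succ m =>
      rw [Finset.sum_eq_single 0]
      · simp [zero_pow (Nat.succ_ne_zero m)]
      · intro k _ hk
        simp [zero_pow hk]
      · intro h
        simp at h
  · obtain ⟨Q, hQ⟩ := solveL r q.natDegree q le_rfl
    have hQ' : ∀ x : ℂ, r * Q.eval (x + 1) - Q.eval x = q.eval x := by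
      intro x
      have := congrArg (Polynomial.eval x) hQ
      simpa [eval_comp] using this
    refine ⟨Q, -Q.eval 0, ?_⟩
    intro n
    induction n with
    | zero => simp
    | succ m ihm =>
      rw [Finset.sum_range_succ, ihm]
      have h1 : r * Q.eval ((m : ℂ) + 1) = Q.eval (m : ℂ) + q.eval (m : ℂ) := by
        have := hQ' (m : ℂ); linear_combination this
      push_cast
      rw [pow_succ]
      linear_combination (-(r ^ m)) * h1

def IsExpPoly (a : ℕ → ℂ) : Prop :=
  ∃ (m : ℕ) (u : Fin m → ℂ) (q : Fin m → Polynomial ℂ),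
    ∀ n : ℕ, a n = ∑ i : Fin m, (q i).eval (n : ℂ) * u i ^ n

lemma shiftStep (u : ℂ) (hu : u ≠ 0) (a b : ℕ → ℂ)
    (hab : ∀ n, a (n + 1) = u * a n + b n) (hb : IsExpPoly b) : IsExpPoly a := by
  obtain ⟨m, v, q, hq⟩ := hb
  -- choose Q i, Cst i for each i
  have key : ∀ i : Fin m, ∃ (Q : Polynomial ℂ) (Cst : ℂ), ∀ n : ℕ,
      ∑ k ∈ Finset.range n, (C u⁻¹ * q i).eval (k : ℂ) * (v i / u) ^ k
        = Q.eval (n : ℂ) * (v i / u) ^ n + Cst :=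
    fun i => partialSum (C u⁻¹ * q i) (v i / u)
  choose Q Cst hQC using key
  -- closed form of a via summation
  have ha : ∀ n : ℕ, a n = a 0 * u ^ n + u ^ n * ∑ k ∈ Finset.range n, b k * (u⁻¹) ^ (k + 1) := by
    intro n
    induction n with
    | zero => simp
    | succ p ihp =>
      rw [hab p, ihp, Finset.sum_range_succ]
      have hcancel : u ^ (p + 1) * (u⁻¹) ^ (p + 1) = 1 := by
        rw [← mul_pow, mul_inv_cancel₀ hu, one_pow]
      rw [pow_succ]
      linear_combination (-(b p)) * hcancel
  have hsum : ∀ n : ℕ, ∑ k ∈ Finset.range n, b k * (u⁻¹) ^ (k + 1)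
      = ∑ i : Fin m, ((Q i).eval (n : ℂ) * (v i / u) ^ n + Cst i) := by
    intro n
    have : ∀ k ∈ Finset.range n, b k * (u⁻¹) ^ (k + 1)
        = ∑ i : Fin m, (C u⁻¹ * q i).eval (k : ℂ) * (v i / u) ^ k := by
      intro k _
      rw [hq k, Finset.sum_mul]
      refine Finset.sum_congr rfl fun i _ => ?_
      rw [eval_mul, eval_C, div_pow, pow_succ, div_eq_mul_inv, ← inv_pow]
      ring
    rw [Finset.sum_congr rfl this, Finset.sum_comm]
    exact Finset.sum_congr rfl fun i _ => hQC i n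
  refine ⟨m + 1, Fin.cons u v, Fin.cons (C (a 0 + ∑ i : Fin m, Cst i)) Q, ?_⟩
  intro n
  rw [Fin.sum_univ_succ, ha n, hsum n]
  simp only [Fin.cons_succ, Fin.cons_zero, eval_C]
  rw [Finset.mul_sum]
  have hterm : ∀ i : Fin m, u ^ n * ((Q i).eval (n : ℂ) * (v i / u) ^ n + Cst i)
      = (Q i).eval (n : ℂ) * v i ^ n + Cst i * u ^ n := by
    intro i
    have hun : u ^ n ≠ 0 := pow_ne_zero _ hu
    rw [div_pow]
    field_simp
  rw [Finset.sum_congr rfl fun i _ => hterm i, Finset.sum_add_distrib, ← Finset.sum_mul]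
  ring

lemma cfinite_aux : ∀ (l : ℕ), 0 < l → ∀ (a c : ℕ → ℂ), c 0 ≠ 0 →
    (∀ n, a (n + l) = ∑ i ∈ Finset.range l, c i * a (n + i)) → IsExpPoly a := by
  intro l
  induction l with
  | zero => intro h; exact absurd h (lt_irrefl 0)
  | succ l ih =>
    intro _ a c hc0 hrec
    by_cases hl0 : l = 0
    · subst hl0
      have h1 : ∀ n, a (n + 1) = c 0 * a n := by
        intro n; simpa using hrec n
      have hcl : ∀ n, a n = a 0 * (c 0) ^ n := by
        intro n
        induction n with
        | zero => simp
        | succ p ihp => rw [h1 p, ihp, pow_succ]; ring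
      exact ⟨1, fun _ => c 0, fun _ => C (a 0), fun n => by simp [hcl n]⟩
    · obtain ⟨m, rfl⟩ : ∃ m, l = m + 1 := ⟨l - 1, by omega⟩
      -- characteristic root
      set S : Polynomial ℂ := ∑ i ∈ Finset.range (m + 2), C (c i) * X ^ i with hS
      set p : Polynomial ℂ := X ^ (m + 2) - S with hp
      have hdegS : S.degree < ((m + 2 : ℕ) : WithBot ℕ) := by
        refine lt_of_le_of_lt (Polynomial.degree_sum_le _ _) ?_
        rw [Finset.sup_lt_iff (by exact_mod_cast WithBot.bot_lt_coe (m + 2))]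
        intro i hi
        refine lt_of_le_of_lt (degree_C_mul_X_pow_le _ _) ?_
        exact_mod_cast Finset.mem_range.mp hi
      have hdeg : p.degree = ((m + 2 : ℕ) : WithBot ℕ) := by
        rw [hp, degree_sub_eq_left_of_degree_lt (by rwa [degree_X_pow]), degree_X_pow]
      obtain ⟨u, hu⟩ := Complex.exists_root (by rw [hdeg]; exact_mod_cast Nat.succ_pos (m + 1))
      have hueq : u ^ (m + 2) = ∑ i ∈ Finset.range (m + 2), c i * u ^ i := by
        have h := hu
        simp only [IsRoot, hp, hS, eval_sub, eval_pow, eval_X, eval_finset_sum,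
          eval_mul, eval_C] at h
        linear_combination h
      have hu0 : u ≠ 0 := by
        intro h
        subst h
        rw [Finset.sum_eq_single 0 (fun k _ hk => by simp [zero_pow hk])
          (fun h => by simp at h)] at hueq
        simp [zero_pow (Nat.succ_ne_zero (m + 1))] at hueq
        exact hc0 hueq.symm
      -- quotient coefficients
      set d : ℕ → ℂ := fun j =>
        (∑ i ∈ Finset.Ico (j + 1) (m + 2), c i * u ^ (i - j - 1)) - u ^ (m + 1 - j) with hd
      have hsplit : ∑ i ∈ Finset.range (m + 2), c i * u ^ i
          = c 0 + ∑ i ∈ Finset.Ico 1 (m + 2), c i * u ^ i := by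
        rw [Finset.range_eq_Ico, Finset.sum_eq_sum_Ico_succ_bot (by omega)]
        simp
      have hd0 : u * d 0 = -c 0 := by
        rw [hd]
        simp only
        rw [mul_sub, Finset.mul_sum]
        have e1 : ∀ i ∈ Finset.Ico 1 (m + 2), u * (c i * u ^ (i - 0 - 1)) = c i * u ^ i := by
          intro i hi
          have h1 : 1 ≤ i := (Finset.mem_Ico.mp hi).1
          rw [mul_comm u, mul_assoc, ← pow_succ]
          congr 2
          omega
        rw [Finset.sum_congr rfl e1]
        have e2 : u * u ^ (m + 1 - 0) = u ^ (m + 2) := by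
          rw [← pow_succ']
          congr 1
        rw [e2]
        have := hueq
        rw [hsplit] at this
        linear_combination -this
      have hd0' : d 0 ≠ 0 := by
        intro h
        rw [h, mul_zero] at hd0
        exact hc0 (by linear_combination hd0)
      have hdm : d m = c (m + 1) - u := by
        rw [hd]
        simp only
        rw [Finset.sum_Ico_eq_sum_range]
        simp
      have hdrec : ∀ j, j < m → d j = c (j + 1) + u * d (j + 1) := by
        intro j hj
        rw [hd]
        simp only
        rw [mul_sub, Finset.mul_sum]
        have e1 : ∀ i ∈ Finset.Ico (j + 2) (m + 2), u * (c i * u ^ (i - (j + 1) - 1))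
            = c i * u ^ (i - j - 1) := by
          intro i hi
          have h1 : j + 2 ≤ i := (Finset.mem_Ico.mp hi).1
          rw [mul_comm u, mul_assoc, ← pow_succ]
          congr 2
          omega
        rw [Finset.sum_congr rfl e1]
        have e2 : u * u ^ (m + 1 - (j + 1)) = u ^ (m + 1 - j) := by
          rw [← pow_succ']
          congr 1
          omega
        rw [e2]
        rw [Finset.sum_eq_sum_Ico_succ_bot (by omega : j + 1 < m + 2)]
        have e3 : c (j + 1) * u ^ (j + 1 - j - 1) = c (j + 1) := by
          have : j + 1 - j - 1 = 0 := by omega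
          rw [this, pow_zero, mul_one]
        rw [e3]
        ring
      -- the reduced sequence
      set b : ℕ → ℂ := fun n => a (n + 1) - u * a n with hb
      have hbrec : ∀ n, b (n + (m + 1)) = ∑ j ∈ Finset.range (m + 1), d j * b (n + j) := by
        intro n
        have hL : b (n + (m + 1))
            = (∑ j ∈ Finset.range m, c (j + 1) * a (n + j + 1)) + c 0 * a n
              + c (m + 1) * a (n + (m + 1)) - u * a (n + (m + 1)) := by
          show a (n + (m + 1) + 1) - u * a (n + (m + 1)) = _
          have hnm : n + (m + 1) + 1 = n + (m + 2) := by omega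
          rw [hnm, hrec n, Finset.sum_range_succ, Finset.sum_range_succ']
          simp only [Nat.add_zero]
          ring_nf
          have hs : ∀ x, a (1 + x + n) = a (1 + n + x) := fun x => by ring_nf
          simp only [hs]
          ring
        have hR : ∑ j ∈ Finset.range (m + 1), d j * b (n + j)
            = (∑ j ∈ Finset.range m, c (j + 1) * a (n + j + 1)) + c 0 * a n
              + c (m + 1) * a (n + (m + 1)) - u * a (n + (m + 1)) := by
          have e0 : ∀ j ∈ Finset.range (m + 1), d j * b (n + j)
              = d j * a (n + j + 1) - u * (d j * a (n + j)) := by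
            intro j _
            rw [hb]
            ring
          rw [Finset.sum_congr rfl e0, Finset.sum_sub_distrib]
          rw [Finset.sum_range_succ (f := fun j => d j * a (n + j + 1))]
          rw [Finset.sum_range_succ' (f := fun j => u * (d j * a (n + j)))]
          simp only [Nat.add_zero]
          have e1 : ∀ j ∈ Finset.range m, d j * a (n + j + 1) - u * (d (j + 1) * a (n + (j + 1)))
              = c (j + 1) * a (n + j + 1) := by
            intro j hj
            have := hdrec j (Finset.mem_range.mp hj)
            have hx : n + (j + 1) = n + j + 1 := by omega
            rw [hx]
            linear_combination a (n + j + 1) * this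
          have hcomb : (∑ j ∈ Finset.range m, d j * a (n + j + 1))
              - ∑ j ∈ Finset.range m, u * (d (j + 1) * a (n + (j + 1)))
              = ∑ j ∈ Finset.range m, c (j + 1) * a (n + j + 1) := by
            rw [← Finset.sum_sub_distrib]
            exact Finset.sum_congr rfl e1
          simp only [← Nat.add_assoc] at hcomb ⊢
          linear_combination hcomb - a n * hd0 + a (n + m + 1) * hdm
        rw [hL, hR]
      -- apply induction hypothesis
      have hbexp : IsExpPoly b := ih (Nat.succ_pos m) b d hd0' hbrec
      exact shiftStep u hu0 a b (fun n => by rw [hb]; ring) hbexp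
end CfiniteAux

open Polynomial Finset

/-- Closed forms of C-finite sequences: every complex sequence satisfying a
homogeneous linear recurrence with constant coefficients (with nonzero lowest
coefficient) is an exponential polynomial, i.e. there are complex numbers
`u 1, …, u m` and polynomials `q 1, …, q m` with
`a n = ∑ i, q i (n) · (u i)^n` for all `n`. -/
theorem cfinite_closed_form (l : ℕ) (hl : 0 < l) (a : ℕ → ℂ) (c : Fin l → ℂ)
    (hc0 : c ⟨0, hl⟩ ≠ 0)
    (hrec : ∀ n : ℕ, a (n + l) = ∑ i : Fin l, c i * a (n + i)) :
    ∃ (m : ℕ) (u : Fin m → ℂ) (q : Fin m → Polynomial ℂ),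
      ∀ n : ℕ, a n = ∑ i : Fin m, (q i).eval (n : ℂ) * u i ^ n := by
  set c' : ℕ → ℂ := fun i => if h : i < l then c ⟨i, h⟩ else 0 with hc'
  have h0 : c' 0 ≠ 0 := by
    rw [hc']
    simpa [dif_pos hl] using hc0
  have hrec' : ∀ n, a (n + l) = ∑ i ∈ Finset.range l, c' i * a (n + i) := by
    intro n
    rw [hrec n, Finset.sum_range (fun i => c' i * a (n + i))]
    refine Finset.sum_congr rfl fun i _ => ?_
    rw [hc']
    simp [dif_pos i.isLt]
  exact cfinite_aux l hl a c' h0 hrec'
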